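/- Let I : [a,b] → ℝ be a nonnegative C¹ function satisfying the differential inequality I'(t) ≤ −c·I(t)³ + C for all t ∈ [a,b], where c, C > 0. Then for every t ∈ [a + δ, b] with δ > 0, I(t) ≤ max((2C/c)^{1/3}, (c δ)^{-1/2}); in particular I is bounded on [a+δ, b] by a constant depending only on c, C, δ and not on I(a). -/

import Mathlib

open Set

/-- A priori bound for the Riccati-type differential inequality
I' ≤ −c I³ + C: for t ≥ a + δ, I(t) ≤ max((2C/c)^{1/3}, (cδ)^{−1/2}),
independently of I(a). -/
theorem riccati_cubic_apriori_bound
    (a b c C δ : ℝ) (hc : 0 < c) (hC : 0 < C) (hδ : 0 < δ)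
    (I I' : ℝ → ℝ)
    (hnonneg : ∀ t ∈ Set.Icc a b, 0 ≤ I t)
    (hderiv : ∀ t ∈ Set.Icc a b, HasDerivAt I (I' t) t)
    (hineq : ∀ t ∈ Set.Icc a b, I' t ≤ -c * (I t) ^ 3 + C) :
    ∀ t ∈ Set.Icc (a + δ) b,
      I t ≤ max ((2 * C / c) ^ ((1 : ℝ) / 3)) ((c * δ) ^ (-(1 : ℝ) / 2)) := by
  intro t ht
  by_contra hM
  push_neg at hM
  obtain ⟨hat, htb⟩ := ht
  set K : ℝ := (2 * C / c) ^ ((1 : ℝ) / 3) with hKdef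
  have hKpos : 0 < K := Real.rpow_pos_of_pos (by positivity) _
  have hta : a < t := by linarith
  have htmem : t ∈ Icc a b := ⟨by linarith, htb⟩
  have hKlt : K < I t := lt_of_le_of_lt (le_max_left _ _) hM
  have hItpos : 0 < I t := lt_trans hKpos hKlt
  have hcont : ContinuousOn I (Icc a b) := fun x hx =>
    ((hderiv x hx).continuousAt).continuousWithinAt
  have hK3 : K ^ 3 = 2 * C / c := by
    rw [hKdef, ← Real.rpow_natCast ((2 * C / c) ^ ((1 : ℝ) / 3)) 3,
      ← Real.rpow_mul (by positivity)]
    norm_num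
  have hcube : ∀ x : ℝ, K < x → -c * x ^ 3 + C ≤ -(c / 2) * x ^ 3 := by
    intro x hx
    have h3 : K ^ 3 < x ^ 3 := pow_lt_pow_left₀ hx hKpos.le (by norm_num)
    rw [hK3, div_lt_iff₀ hc] at h3
    nlinarith
  -- Step 1: I is at least I t on all of [a, t]
  have key : ∀ s ∈ Icc a t, I t ≤ I s := by
    intro s hs
    by_contra hls
    push_neg at hls
    set y : ℝ := (max (I s) K + I t) / 2 with hy
    have hmax_lt : max (I s) K < I t := max_lt hls hKlt
    have hy1 : I s < y := by
      have := le_max_left (I s) K; simp only [hy]; linarith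
    have hyK : K < y := by
      have := le_max_right (I s) K; simp only [hy]; linarith
    have hy2 : y < I t := by simp only [hy]; linarith
    set A : Set ℝ := Icc s t ∩ I ⁻¹' Iic y with hA
    have hsub : Icc s t ⊆ Icc a b := Icc_subset_Icc hs.1 htb
    have hAclosed : IsClosed A :=
      (hcont.mono hsub).preimage_isClosed_of_isClosed isClosed_Icc isClosed_Iic
    have hsA : s ∈ A := ⟨⟨le_refl s, hs.2⟩, hy1.le⟩
    have hAbdd : BddAbove A := BddAbove.mono (fun r hr => hr.1) bddAbove_Icc
    obtain ⟨u, huA, husup⟩ : ∃ u, u ∈ A ∧ IsLUB A u :=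
      ⟨sSup A, hAclosed.csSup_mem ⟨s, hsA⟩ hAbdd, isLUB_csSup ⟨s, hsA⟩ hAbdd⟩
    have hus : s ≤ u := husup.1 hsA
    have hut : u ≤ t := huA.1.2
    have hIu : I u ≤ y := huA.2
    have hult : u < t := lt_of_le_of_ne hut (by rintro rfl; exact absurd hIu (not_le.2 hy2))
    have hgt : ∀ r, u < r → r ≤ t → y < I r := by
      intro r hur hrt
      by_contra hle
      push_neg at hle
      have : r ∈ A := ⟨⟨le_trans hus hur.le, hrt⟩, hle⟩
      exact absurd (husup.1 this) (not_le.2 hur)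
    have hanti : StrictAntiOn I (Icc u t) := by
      apply strictAntiOn_of_deriv_neg (convex_Icc u t)
        (hcont.mono (Icc_subset_Icc (le_trans hs.1 hus) htb))
      intro x hx
      rw [interior_Icc] at hx
      have hxab : x ∈ Icc a b := ⟨le_trans hs.1 (le_trans hus hx.1.le), le_trans hx.2.le htb⟩
      rw [(hderiv x hxab).deriv]
      have hxK : K < I x := lt_trans hyK (hgt x hx.1 hx.2.le)
      have hxpos : 0 < I x := lt_trans hKpos hxK
      have := hcube (I x) hxK
      have := hineq x hxab
      nlinarith
    have : I t < I u := hanti ⟨le_refl u, hult.le⟩ ⟨hult.le, le_refl t⟩ hult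
    linarith
  -- Step 2: the function s ↦ (I s)⁻² − c s is monotone on [a, t]
  have hIlow : ∀ s ∈ Icc a t, 0 < I s := fun s hs => lt_of_lt_of_le hItpos (key s hs)
  set F : ℝ → ℝ := fun s => ((I s) ^ 2)⁻¹ - c * s with hF
  have hFderiv : ∀ x ∈ Icc a t, HasDerivAt F (-(2 * I x ^ 1 * I' x) / (I x ^ 2) ^ 2 - c) x := by
    intro x hx
    have hxab : x ∈ Icc a b := ⟨hx.1, hx.2.trans htb⟩
    have h1 : HasDerivAt (fun s => (I s) ^ 2) (2 * I x ^ 1 * I' x) x := by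
      have := (hderiv x hxab).pow 2
      simpa [Pi.pow_def] using this
    have h2 := h1.inv (pow_pos (hIlow x hx) 2).ne'
    have h3 : HasDerivAt (fun s => c * s) c x := by
      simpa using (hasDerivAt_id x).const_mul c
    exact h2.sub h3
  have hmono : MonotoneOn F (Icc a t) := by
    apply monotoneOn_of_deriv_nonneg (convex_Icc a t)
    · exact fun x hx => ((hFderiv x hx).continuousAt).continuousWithinAt
    · intro x hx
      rw [interior_Icc] at hx
      exact ((hFderiv x (Ioo_subset_Icc_self hx)).differentiableAt).differentiableWithinAt
    · intro x hx
      rw [interior_Icc] at hx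
      have hx' : x ∈ Icc a t := Ioo_subset_Icc_self hx
      rw [(hFderiv x hx').deriv]
      have hxab : x ∈ Icc a b := ⟨hx'.1, hx'.2.trans htb⟩
      have hxpos : 0 < I x := hIlow x hx'
      have hxK : K < I x := lt_of_lt_of_le hKlt (key x hx')
      have h1 := hcube (I x) hxK
      have h2 := hineq x hxab
      have hI' : I' x ≤ -(c / 2) * I x ^ 3 := le_trans h2 h1
      rw [sub_nonneg, le_div_iff₀ (by positivity)]
      nlinarith [pow_pos hxpos 4]
  have hFa : F a ≤ F t := hmono ⟨le_refl a, hta.le⟩ ⟨hta.le, le_refl t⟩ hta.le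
  have hIa2 : 0 < (I a) ^ 2 := pow_pos (hIlow a ⟨le_refl a, hta.le⟩) 2
  have hcd : c * δ ≤ ((I t) ^ 2)⁻¹ := by
    have h1 : (0:ℝ) < ((I a) ^ 2)⁻¹ := by positivity
    have : c * δ ≤ c * (t - a) := by nlinarith
    simp only [hF] at hFa
    linarith
  -- conclude I t ≤ (c δ)^{-1/2}
  have hsq : (I t) ^ 2 ≤ (c * δ)⁻¹ := by
    have hcdpos : 0 < c * δ := by positivity
    have hIt2 : 0 < (I t) ^ 2 := pow_pos hItpos 2
    exact (le_inv_comm₀ hcdpos hIt2).mp hcd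
  have hfin : I t ≤ (c * δ) ^ (-(1 : ℝ) / 2) := by
    have h1 : I t = Real.sqrt ((I t) ^ 2) := (Real.sqrt_sq hItpos.le).symm
    have h2 : Real.sqrt ((I t) ^ 2) ≤ Real.sqrt ((c * δ)⁻¹) := Real.sqrt_le_sqrt hsq
    have h3 : Real.sqrt ((c * δ)⁻¹) = (c * δ) ^ (-(1 : ℝ) / 2) := by
      rw [Real.sqrt_eq_rpow, Real.inv_rpow (by positivity), ← Real.rpow_neg (by positivity)]
      norm_num
    rw [h1, ← h3]; exact h2
  exact absurd hfin (not_le.2 (lt_of_le_of_lt (le_max_right _ _) hM))
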